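/- Let k be a field of characteristic 2 and ρ_X : G_X → Perm(ZMod 3) the group homomorphism with ρ_X(g_i)(j) = i ▷ j. A function λ : ZMod 3 × ZMod 3 → k satisfies λ(i, j▷k) + λ(j, k) = λ(i▷j, i▷k) + λ(i, k) for all i, j, k ∈ ZMod 3 (condition eq:lij) if and only if there exists a cocycle b : G_X × ZMod 3 → k (with respect to ρ_X) such that b(g_i, j) = λ(i, j) for all i, j ∈ ZMod 3. -/

import Mathlib

/-- The rack operation `i ▷ j = 2i − j` on `ZMod 3` (the rack of transpositions in `S₃`). -/
def rackOp (i j : ZMod 3) : ZMod 3 := 2 * i - j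

/-- The defining relations `g_i g_j (g_{i▷j} g_i)⁻¹` of the enveloping group `G_X`. -/
def envRels : Set (FreeGroup (ZMod 3)) :=
  {r | ∃ i j : ZMod 3,
    r = FreeGroup.of i * FreeGroup.of j * (FreeGroup.of (rackOp i j) * FreeGroup.of i)⁻¹}

/-- The enveloping group `G_X` of the rack `(ZMod 3, ▷)`, presented by generators `g₀, g₁, g₂`
and relations `g_i g_j = g_{i▷j} g_i`. -/
def EnvGroup : Type := PresentedGroup envRels

instance : Group EnvGroup := by unfold EnvGroup; infer_instance

/-- The fundamental relation `g_i g_j = g_{i▷j} g_i` in the enveloping group. -/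
lemma envGroup_rel (i j : ZMod 3) :
    (PresentedGroup.of (rels := envRels) i) * PresentedGroup.of j =
      PresentedGroup.of (rackOp i j) * PresentedGroup.of i := by
  have h : (QuotientGroup.mk (FreeGroup.of i * FreeGroup.of j *
      (FreeGroup.of (rackOp i j) * FreeGroup.of i)⁻¹) : PresentedGroup envRels) = 1 :=
    (QuotientGroup.eq_one_iff _).mpr (Subgroup.subset_normalClosure ⟨i, j, rfl⟩)
  rw [QuotientGroup.mk_mul, QuotientGroup.mk_mul, QuotientGroup.mk_inv,
    QuotientGroup.mk_mul, mul_inv_eq_one] at h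
  exact h

lemma envGroup_rel' (i j : ZMod 3) :
    @HMul.hMul EnvGroup EnvGroup EnvGroup _ (PresentedGroup.of (rels := envRels) i)
        (PresentedGroup.of j) =
      @HMul.hMul EnvGroup EnvGroup EnvGroup _ (PresentedGroup.of (rels := envRels) (rackOp i j))
        (PresentedGroup.of i) :=
  envGroup_rel i j

/-- Auxiliary group: pairs of a function `ZMod 3 → k` and a permutation, with the
"reversed" semidirect multiplication encoding the cocycle condition. -/
structure CocPair (k : Type*) where
  f : ZMod 3 → k
  σ : Equiv.Perm (ZMod 3)

namespace CocPair

variable {k : Type*} [AddCommGroup k]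

lemma ext' {a b : CocPair k} (h1 : a.f = b.f) (h2 : a.σ = b.σ) : a = b := by
  cases a; cases b; simp_all

instance : Mul (CocPair k) := ⟨fun a b => ⟨fun i => a.f (b.σ i) + b.f i, a.σ * b.σ⟩⟩
instance : One (CocPair k) := ⟨⟨0, 1⟩⟩
instance : Inv (CocPair k) := ⟨fun a => ⟨fun i => -a.f (a.σ⁻¹ i), a.σ⁻¹⟩⟩

@[simp] lemma mul_f (a b : CocPair k) (i : ZMod 3) :
    (a * b).f i = a.f (b.σ i) + b.f i := rfl

@[simp] lemma mul_σ (a b : CocPair k) : (a * b).σ = a.σ * b.σ := rfl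

@[simp] lemma one_f (i : ZMod 3) : (1 : CocPair k).f i = 0 := rfl

@[simp] lemma one_σ : (1 : CocPair k).σ = 1 := rfl

instance : Group (CocPair k) where
  mul_assoc a b c := by
    refine ext' (funext fun i => ?_) (mul_assoc _ _ _)
    simp [Equiv.Perm.mul_apply, add_assoc]
  one_mul a := by
    refine ext' (funext fun i => ?_) (one_mul _)
    simp
  mul_one a := by
    refine ext' (funext fun i => ?_) (mul_one _)
    show a.f ((1 : Equiv.Perm (ZMod 3)) i) + (0 : k) = a.f i
    simp
  inv_mul_cancel a := by
    refine ext' (funext fun i => ?_) (inv_mul_cancel _)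
    show -a.f (a.σ⁻¹ (a.σ i)) + a.f i = 0
    simp

/-- Projection onto the permutation component, as a group hom. -/
def projσ : CocPair k →* Equiv.Perm (ZMod 3) where
  toFun a := a.σ
  map_one' := rfl
  map_mul' _ _ := rfl

end CocPair

/-- Over a field `k` of characteristic `2`, a function
`λ : ZMod 3 × ZMod 3 → k` satisfies condition eq:lij iff it extends to a cocycle
`b : G_X × ZMod 3 → k` with respect to `ρ_X`, i.e. `b(g_i, j) = λ(i,j)`. -/
theorem lij_iff_extends_to_cocycle {k : Type*} [Field k] [CharP k 2]
    (ρX : EnvGroup →* Equiv.Perm (ZMod 3))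
    (hρX : ∀ i j : ZMod 3, ρX (PresentedGroup.of (rels := envRels) i) j = rackOp i j)
    (lam : ZMod 3 → ZMod 3 → k) :
    (∀ i j l : ZMod 3,
        lam i (rackOp j l) + lam j l = lam (rackOp i j) (rackOp i l) + lam i l) ↔
      ∃ b : EnvGroup → ZMod 3 → k,
        (∀ (u v : EnvGroup) (i : ZMod 3), b (u * v) i = b u (ρX v i) + b v i) ∧
        (∀ i j : ZMod 3, b (PresentedGroup.of (rels := envRels) i) j = lam i j) := by
  constructor
  · intro hl
    set F : ZMod 3 → CocPair k := fun i => ⟨lam i, ρX (PresentedGroup.of (rels := envRels) i)⟩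
      with hF
    have hrel : ∀ r ∈ envRels, FreeGroup.lift F r = 1 := by
      rintro r ⟨i, j, rfl⟩
      simp only [map_mul, map_inv, FreeGroup.lift_apply_of, mul_inv_eq_one]
      refine CocPair.ext' (funext fun l => ?_) ?_
      · show lam i (ρX (PresentedGroup.of j) l) + lam j l
          = lam (rackOp i j) (ρX (PresentedGroup.of i) l) + lam i l
        rw [hρX, hρX]; exact hl i j l
      · show ρX (PresentedGroup.of i) * ρX (PresentedGroup.of j)
          = ρX (PresentedGroup.of (rackOp i j)) * ρX (PresentedGroup.of i)
        exact (map_mul ρX _ _).symm.trans ((congrArg ρX (envGroup_rel' i j)).trans (map_mul ρX _ _))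
    set Φ : EnvGroup →* CocPair k := PresentedGroup.toGroup hrel with hΦ
    have hrelσ : ∀ r ∈ envRels,
        FreeGroup.lift (fun i => ρX (PresentedGroup.of (rels := envRels) i)) r = 1 := by
      rintro r ⟨i, j, rfl⟩
      simp only [map_mul, map_inv, FreeGroup.lift_apply_of, mul_inv_eq_one]
      exact (map_mul ρX _ _).symm.trans ((congrArg ρX (envGroup_rel' i j)).trans (map_mul ρX _ _))
    have hσ : ∀ u : EnvGroup, (Φ u).σ = ρX u := fun u =>
      (PresentedGroup.toGroup.unique hrelσ (CocPair.projσ.comp Φ)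
        (fun x => by
          show (Φ (PresentedGroup.of x)).σ = _
          exact congrArg CocPair.σ (PresentedGroup.toGroup.of hrel))).trans
      (PresentedGroup.toGroup.unique hrelσ ρX (fun x => rfl)).symm
    refine ⟨fun u => (Φ u).f, ?_, ?_⟩
    · intro u v i
      show (Φ (u * v)).f i = (Φ u).f (ρX v i) + (Φ v).f i
      rw [map_mul, CocPair.mul_f, hσ]
    · intro i j
      show (Φ (PresentedGroup.of i)).f j = lam i j
      exact congrFun (congrArg CocPair.f (PresentedGroup.toGroup.of hrel)) j
  · rintro ⟨b, hb, hbo⟩ i j l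
    have h1 := hb (PresentedGroup.of (rels := envRels) i) (PresentedGroup.of j) l
    have h2 := hb (PresentedGroup.of (rels := envRels) (rackOp i j)) (PresentedGroup.of i) l
    rw [envGroup_rel'] at h1
    rw [h2] at h1
    rw [hρX, hρX, hbo, hbo, hbo, hbo] at h1
    exact h1.symm
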